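/- Let $\mathbb{X}$ be a $p$-Banach space, $0<p\le1$, with a basis satisfying, for some constants: (i) for each finite $A$ and unimodular signs $\varepsilon$, and each subset $B\subseteq A$, $\|1_{\varepsilon,B}\|\le K\|1_{\varepsilon,A}\|$ (SUCC with constant $K$). Then there is a constant $C$, depending only on $p$ and $K$, such that $\|\sum_{n\in A}a_n x_n\|\le C\max_{n\in A}|a_n|\,\|1_{\varepsilon,A}\|$ for all finite $A$, all scalars $(a_n)_{n\in A}$, and all unimodular $\varepsilon\in\mathcal{E}_A$ with $\varepsilon_n=\mathrm{sgn}(a_n)$ when $a_n\ne 0$. -/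

import Mathlib

open Finset Set

/-- A (quasi-)basis of a quasi-Banach space: a quasi-norm `q` with modulus of
concavity `κ`, together with a norm-bounded biorthogonal system `(e, c)`. -/
structure QBasis (X : Type*) [AddCommGroup X] [Module ℝ X] where
  q : X → ℝ
  κ : ℝ
  one_le_κ : 1 ≤ κ
  q_nonneg : ∀ f, 0 ≤ q f
  q_eq_zero_iff : ∀ f, q f = 0 ↔ f = 0
  q_smul : ∀ (t : ℝ) (f : X), q (t • f) = |t| * q f
  q_add : ∀ f g, q (f + g) ≤ κ * (q f + q g)
  e : ℕ → X
  c : ℕ → X →ₗ[ℝ] ℝ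
  biorth : ∀ m n, c m (e n) = if m = n then (1 : ℝ) else 0
  e_bdd : ∃ M, ∀ n, q (e n) ≤ M
  c_bdd : ∃ M, ∀ n f, |c n f| ≤ M * q f

namespace QBasis

variable {X : Type*} [AddCommGroup X] [Module ℝ X] (B : QBasis X)

/-- Coordinate projection on a finite set `A`. -/
noncomputable def S (A : Finset ℕ) (f : X) : X := ∑ n ∈ A, B.c n f • B.e n

/-- The set `𝒬` of vectors with coefficients in the unit ball of `ℓ∞`. -/
def inQ (f : X) : Prop := ∀ n, |B.c n f| ≤ 1

/-- `A` is the set `A(a,f) = {n : |c n f| ≥ a}` of coefficients above the threshold `a`. -/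
def thrSet (a : ℝ) (f : X) (A : Finset ℕ) : Prop := ∀ n, n ∈ A ↔ a ≤ |B.c n f|

/-- `A` is a greedy set of `f`. -/
def greedySet (f : X) (A : Finset ℕ) : Prop :=
  ∀ n ∈ A, ∀ k, k ∉ A → |B.c k f| ≤ |B.c n f|

/-- The restricted truncation operator associated with a finite set `A`:
`R(f,A) = min_{n∈A} |c n f| ∑_{n∈A} sgn (c n f) • e n`. -/
noncomputable def R (A : Finset ℕ) (f : X) : X :=
  if h : A.Nonempty then
    (A.inf' h fun n => |B.c n f|) • ∑ n ∈ A, Real.sign (B.c n f) • B.e n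
  else 0

/-- `lam` is the nearly truncation quasi-greedy function of the basis: for every
`a ∈ (0,1)`, `lam a` is the smallest constant `C` with `q (R^{(a)} f) ≤ C * q f`
for all `f ∈ 𝒬`. -/
def NTQGFun (lam : ℝ → ℝ) : Prop :=
  ∀ a ∈ Set.Ioo (0 : ℝ) 1,
    (∀ f, B.inQ f → ∀ A : Finset ℕ, B.thrSet a f A → B.q (B.R A f) ≤ lam a * B.q f) ∧
    (∀ C : ℝ, (∀ f, B.inQ f → ∀ A : Finset ℕ, B.thrSet a f A → B.q (B.R A f) ≤ C * B.q f) →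
      lam a ≤ C)

/-- The basis is nearly truncation quasi-greedy. -/
def NearlyTQG : Prop :=
  ∀ a ∈ Set.Ioo (0 : ℝ) 1, ∃ C : ℝ,
    ∀ f, B.inQ f → ∀ A : Finset ℕ, B.thrSet a f A → B.q (B.R A f) ≤ C * B.q f

/-- The basis is nearly unconditional. -/
def NearlyUnconditional : Prop :=
  ∀ a ∈ Set.Ioo (0 : ℝ) 1, ∃ C : ℝ,
    ∀ f, B.inQ f → ∀ Aa A : Finset ℕ, B.thrSet a f Aa → A ⊆ Aa → B.q (B.S A f) ≤ C * B.q f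

/-- `phi` is the nearly unconditionality function: `phi a` is the smallest `C` with
`q (S_A f) ≤ C * q f` for `f ∈ 𝒬` and `A ⊆ A(a,f)`. -/
def NUFun (phi : ℝ → ℝ) : Prop :=
  ∀ a ∈ Set.Ioo (0 : ℝ) 1,
    (∀ f, B.inQ f → ∀ Aa A : Finset ℕ, B.thrSet a f Aa → A ⊆ Aa →
      B.q (B.S A f) ≤ phi a * B.q f) ∧
    (∀ C : ℝ, (∀ f, B.inQ f → ∀ Aa A : Finset ℕ, B.thrSet a f Aa → A ⊆ Aa →
      B.q (B.S A f) ≤ C * B.q f) → phi a ≤ C)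

/-- `theta` is the thresholding-boundedness function: `theta a` is the smallest `C` with
`q (S_{A(a,f)} f) ≤ C * q f` for `f ∈ 𝒬`. -/
def ThetaFun (theta : ℝ → ℝ) : Prop :=
  ∀ a ∈ Set.Ioo (0 : ℝ) 1,
    (∀ f, B.inQ f → ∀ A : Finset ℕ, B.thrSet a f A → B.q (B.S A f) ≤ theta a * B.q f) ∧
    (∀ C : ℝ, (∀ f, B.inQ f → ∀ A : Finset ℕ, B.thrSet a f A → B.q (B.S A f) ≤ C * B.q f) →
      theta a ≤ C)

/-- The basis is truncation quasi-greedy: the restricted truncation operators are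
uniformly bounded over greedy sets. -/
def TruncationQG : Prop :=
  ∃ C : ℝ, ∀ f (A : Finset ℕ), B.greedySet f A → B.q (B.R A f) ≤ C * B.q f

end QBasis


open Finset

lemma qbasis_q_zero {X : Type} [AddCommGroup X] [Module ℝ X] (B : QBasis X) : B.q 0 = 0 :=
  (B.q_eq_zero_iff 0).2 rfl

lemma qbasis_sum_rpow {X : Type} [AddCommGroup X] [Module ℝ X] (B : QBasis X)
    {p : ℝ} (hp : 0 < p)
    (hsub : ∀ f g, B.q (f + g) ^ p ≤ B.q f ^ p + B.q g ^ p)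
    {ι : Type} [DecidableEq ι] (s : Finset ι) (g : ι → X) :
    B.q (∑ i ∈ s, g i) ^ p ≤ ∑ i ∈ s, B.q (g i) ^ p := by
  induction s using Finset.induction with
  | empty => simp [qbasis_q_zero, Real.zero_rpow hp.ne']
  | @insert a s hx ih =>
      rw [Finset.sum_insert hx, Finset.sum_insert hx]
      calc B.q (g a + ∑ i ∈ s, g i) ^ p ≤ B.q (g a) ^ p + B.q (∑ i ∈ s, g i) ^ p := hsub _ _
        _ ≤ _ := by linarith

lemma digit_mem (y : ℝ) : ⌊2 * y⌋ - 2 * ⌊y⌋ = 0 ∨ ⌊2 * y⌋ - 2 * ⌊y⌋ = 1 := by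
  have h1 : 2 * ⌊y⌋ ≤ ⌊2 * y⌋ := by
    apply Int.le_floor.2
    push_cast
    nlinarith [Int.floor_le y]
  have h2 : ⌊2 * y⌋ < 2 * ⌊y⌋ + 2 := by
    apply Int.floor_lt.2
    push_cast
    nlinarith [Int.lt_floor_add_one y]
  omega
lemma real_sign_mul_abs (x : ℝ) : Real.sign x * |x| = x := by
  rcases lt_trichotomy x 0 with h | h | h
  · rw [Real.sign_of_neg h, abs_of_neg h]; ring
  · simp [h]
  · rw [Real.sign_of_pos h, abs_of_pos h]; ring

/-- if a basis of a `p`-Banach space, `0 < p ≤ 1`, is SUCC with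
constant `K`, then there is `C = C(p, K)` such that
`‖∑_{n∈A} a_n e_n‖ ≤ C max_{n∈A} |a_n| ‖1_{ε,A}‖` whenever `ε ∈ 𝓔_A` satisfies
`ε_n = sgn a_n` for `a_n ≠ 0`. -/
theorem stmt13 :
    ∀ p K : ℝ, 0 < p → p ≤ 1 → ∃ C : ℝ, 0 < C ∧
      ∀ (X : Type) (_ : AddCommGroup X) (_ : Module ℝ X) (B : QBasis X),
        (∀ f g, B.q (f + g) ^ p ≤ B.q f ^ p + B.q g ^ p) →
        (∀ (A : Finset ℕ) (ε : ℕ → ℝ), (∀ n ∈ A, |ε n| = 1) → ∀ A' ⊆ A,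
          B.q (∑ n ∈ A', ε n • B.e n) ≤ K * B.q (∑ n ∈ A, ε n • B.e n)) →
        ∀ (A : Finset ℕ) (hA : A.Nonempty) (a ε : ℕ → ℝ),
          (∀ n ∈ A, |ε n| = 1) → (∀ n ∈ A, a n ≠ 0 → ε n = Real.sign (a n)) →
          B.q (∑ n ∈ A, a n • B.e n) ≤
            C * (A.sup' hA fun n => |a n|) * B.q (∑ n ∈ A, ε n • B.e n) := by
  intro p K hp hp1
  have h2p : (1 : ℝ) < (2 : ℝ) ^ p :=
    (Real.one_lt_rpow_iff_of_pos (by norm_num)).2 (Or.inl ⟨by norm_num, hp⟩)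
  set D : ℝ := ((2 : ℝ) ^ p - 1) ^ (-(1 / p)) with hD
  have hDpos : 0 < D := Real.rpow_pos_of_pos (by linarith) _
  refine ⟨2 * max K 1 * D, by positivity, ?_⟩
  intro X _ _ B hsub hsucc A hA a ε hε hsgn
  obtain ⟨m, hm⟩ := id hA
  set Q : ℝ := B.q (∑ n ∈ A, ε n • B.e n) with hQdef
  have hQ0 : 0 ≤ Q := B.q_nonneg _
  -- Q is positive
  have hcm : B.c m (∑ n ∈ A, ε n • B.e n) = ε m := by
    rw [map_sum]
    have hterm : ∀ n ∈ A, B.c m (ε n • B.e n) = if m = n then ε n else 0 := by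
      intro n _
      rw [map_smul, B.biorth m n, smul_eq_mul]
      split <;> simp_all
    rw [Finset.sum_congr rfl hterm, Finset.sum_ite_eq, if_pos hm]
  have hQpos : 0 < Q := by
    obtain ⟨Mc, hMc⟩ := B.c_bdd
    have h1 := hMc m (∑ n ∈ A, ε n • B.e n)
    rw [hcm, hε m hm] at h1
    rcases hQ0.lt_or_eq with h | h
    · exact h
    · rw [← hQdef, ← h, mul_zero] at h1; linarith
  have hK1 : 1 ≤ K := by
    have h := hsucc A ε hε A (Finset.Subset.refl A)
    have h2 : 1 * Q ≤ K * Q := by rw [one_mul]; exact h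
    exact le_of_mul_le_mul_right h2 hQpos
  set M : ℝ := A.sup' hA fun n => |a n| with hMdef
  have hM0 : 0 ≤ M := by
    rw [hMdef]
    exact le_trans (abs_nonneg (a m)) (Finset.le_sup' (fun n => |a n|) hm)
  have hMle : ∀ n ∈ A, |a n| ≤ M := by
    intro n hn
    rw [hMdef]
    exact Finset.le_sup' (fun n => |a n|) hn
  rcases hM0.lt_or_eq with hMpos | hMeq
  swap
  · -- M = 0 : all coefficients vanish
    have hz : ∀ n ∈ A, a n • B.e n = 0 := by
      intro n hn
      have h1 := hMle n hn
      rw [← hMeq] at h1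
      rw [abs_nonpos_iff.1 h1, zero_smul]
    rw [Finset.sum_eq_zero hz, qbasis_q_zero, ← hMeq, mul_zero, zero_mul]
  -- main case M > 0
  have hM2 : (0:ℝ) < 2 * M := by linarith
  set b : ℕ → ℝ := fun n => |a n| / (2 * M) with hbdef
  have hb0 : ∀ n ∈ A, 0 ≤ b n := fun n _ => div_nonneg (abs_nonneg _) hM2.le
  have hb1 : ∀ n ∈ A, b n < 1 := by
    intro n hn
    simp only [hbdef]
    rw [div_lt_one hM2]
    have := hMle n hn; linarith
  have ha_eq : ∀ n ∈ A, a n = 2 * M * b n * ε n := by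
    intro n hn
    by_cases h : a n = 0
    · simp [h, hbdef]
    · rw [hsgn n hn h]
      simp only [hbdef]
      rw [show 2 * M * (|a n| / (2 * M)) * Real.sign (a n)
          = Real.sign (a n) * |a n| * (2 * M / (2 * M)) by ring,
        div_self hM2.ne', mul_one, real_sign_mul_abs]
  -- binary digits
  set d : ℕ → ℕ → ℤ := fun k n => ⌊2 ^ (k + 1) * b n⌋ - 2 * ⌊2 ^ k * b n⌋ with hddef
  have hdmem : ∀ k n, d k n = 0 ∨ d k n = 1 := by
    intro k n
    simp only [hddef]
    rw [show (2:ℝ) ^ (k+1) * b n = 2 * ((2:ℝ) ^ k * b n) by ring]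
    exact digit_mem _
  have hfl0 : ∀ n ∈ A, ⌊b n⌋ = 0 :=
    fun n hn => Int.floor_eq_zero_iff.2 ⟨hb0 n hn, hb1 n hn⟩
  have hscalar : ∀ n ∈ A, ∀ N : ℕ,
      ∑ k ∈ Finset.range N, (d k n : ℝ) * ((2:ℝ) ^ (k+1))⁻¹
        = (⌊2 ^ N * b n⌋ : ℝ) / 2 ^ N := by
    intro n hn N
    have step : ∀ k, (d k n : ℝ) * ((2:ℝ) ^ (k+1))⁻¹
        = (⌊2 ^ (k+1) * b n⌋ : ℝ) / 2 ^ (k+1) - (⌊2 ^ k * b n⌋ : ℝ) / 2 ^ k := by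
      intro k
      simp only [hddef]
      push_cast
      field_simp
      ring
    rw [Finset.sum_congr rfl fun k _ => step k,
      Finset.sum_range_sub (fun k => (⌊2 ^ k * b n⌋ : ℝ) / 2 ^ k) N]
    simp [hfl0 n hn]
  -- residual bound
  have hres : ∀ n ∈ A, ∀ N : ℕ,
      0 ≤ b n - (⌊2 ^ N * b n⌋ : ℝ) / 2 ^ N ∧
      b n - (⌊2 ^ N * b n⌋ : ℝ) / 2 ^ N ≤ ((2:ℝ) ^ N)⁻¹ := by
    intro n hn N
    have h2N : (0:ℝ) < 2 ^ N := by positivity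
    constructor
    · have h := Int.floor_le ((2:ℝ) ^ N * b n)
      rw [sub_nonneg, div_le_iff₀ h2N]
      linarith
    · have h := Int.lt_floor_add_one ((2:ℝ) ^ N * b n)
      rw [inv_eq_one_div, sub_le_iff_le_add, ← add_div, le_div_iff₀ h2N]
      linarith
  -- SUCC consequences
  have hqe : ∀ n ∈ A, B.q (B.e n) ≤ K * Q := by
    intro n hn
    have h := hsucc A ε hε {n} (Finset.singleton_subset_iff.2 hn)
    rw [Finset.sum_singleton, B.q_smul, hε n hn, one_mul] at h
    exact h
  have hGk : ∀ k : ℕ,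
      B.q (∑ n ∈ A.filter (fun n => d k n = 1), ε n • B.e n) ≤ K * Q :=
    fun k => hsucc A ε hε _ (Finset.filter_subset _ _)
  -- the geometric ratio
  set r : ℝ := ((2:ℝ) ^ p)⁻¹ with hrdef
  have hr0 : 0 ≤ r := by positivity
  have hr1 : r < 1 := by
    rw [hrdef]
    exact inv_lt_one_of_one_lt₀ h2p
  have hpow : ∀ j : ℕ, (((2:ℝ) ^ j)⁻¹) ^ p = r ^ j := by
    intro j
    rw [Real.inv_rpow (by positivity), ← Real.rpow_natCast (2:ℝ) j,
      ← Real.rpow_mul (by norm_num : (0:ℝ) ≤ 2), mul_comm (j:ℝ) p,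
      Real.rpow_mul (by norm_num : (0:ℝ) ≤ 2), Real.rpow_natCast, ← inv_pow]
  have hgeo : ∀ N : ℕ, ∑ k ∈ Finset.range N, r ^ (k+1) ≤ ((2:ℝ) ^ p - 1)⁻¹ := by
    intro N
    have h1r : 0 < 1 - r := by linarith
    have hmul := geom_sum_mul r N
    have hSle : (∑ k ∈ Finset.range N, r ^ k) * (1 - r) ≤ 1 := by
      nlinarith [pow_nonneg hr0 N]
    have hS : ∑ k ∈ Finset.range N, r ^ k ≤ (1 - r)⁻¹ := by
      rw [inv_eq_one_div, le_div_iff₀ h1r]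
      exact hSle
    have hsum : ∑ k ∈ Finset.range N, r ^ (k+1) = r * ∑ k ∈ Finset.range N, r ^ k := by
      rw [Finset.mul_sum]
      exact Finset.sum_congr rfl fun k _ => by ring
    rw [hsum]
    calc r * ∑ k ∈ Finset.range N, r ^ k ≤ r * (1 - r)⁻¹ :=
          mul_le_mul_of_nonneg_left hS hr0
      _ = ((2:ℝ) ^ p - 1)⁻¹ := by
          have h2pne : ((2:ℝ) ^ p) ≠ 0 := by positivity
          have hne1 : ((2:ℝ) ^ p - 1) ≠ 0 := by linarith
          rw [hrdef]
          rw [show 1 - ((2:ℝ)^p)⁻¹ = ((2:ℝ)^p - 1)/((2:ℝ)^p) by field_simp, inv_div]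
          field_simp
  set E : ℝ := (2 * M * (K * Q)) ^ p with hEdef
  have hE0 : 0 ≤ E := Real.rpow_nonneg (by positivity) _
  have main : ∀ N : ℕ, B.q (∑ n ∈ A, a n • B.e n) ^ p ≤
      E * (((2:ℝ) ^ p - 1)⁻¹ + (A.card : ℝ) * r ^ N) := by
    intro N
    set G : ℕ → X := fun k => ∑ n ∈ A.filter (fun n => d k n = 1), ε n • B.e n with hGdef
    set c : ℕ → ℝ := fun k => 2 * M * ((2:ℝ) ^ (k+1))⁻¹ with hcdef
    set w : ℕ → ℝ := fun n => 2 * M * (b n - (⌊2 ^ N * b n⌋ : ℝ) / 2 ^ N) * ε n with hwdef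
    have key : ∑ n ∈ A, a n • B.e n
        = (∑ k ∈ Finset.range N, c k • G k) + ∑ n ∈ A, w n • B.e n := by
      have hGk' : ∀ k, c k • G k
          = ∑ n ∈ A, (if d k n = 1 then c k * ε n else 0) • B.e n := by
        intro k
        simp only [hGdef]
        rw [Finset.smul_sum, Finset.sum_filter]
        refine Finset.sum_congr rfl fun n hn => ?_
        split <;> simp [smul_smul]
      have swap : ∑ k ∈ Finset.range N, c k • G k
          = ∑ n ∈ A, (∑ k ∈ Finset.range N, if d k n = 1 then c k * ε n else 0) • B.e n := by
        calc ∑ k ∈ Finset.range N, c k • G k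
            = ∑ k ∈ Finset.range N, ∑ n ∈ A,
                (if d k n = 1 then c k * ε n else 0) • B.e n :=
              Finset.sum_congr rfl fun k _ => hGk' k
          _ = ∑ n ∈ A, ∑ k ∈ Finset.range N,
                (if d k n = 1 then c k * ε n else 0) • B.e n := Finset.sum_comm
          _ = ∑ n ∈ A, (∑ k ∈ Finset.range N,
                if d k n = 1 then c k * ε n else 0) • B.e n :=
              Finset.sum_congr rfl fun n _ => (Finset.sum_smul).symm
      rw [swap, ← Finset.sum_add_distrib]
      refine Finset.sum_congr rfl fun n hn => ?_
      rw [← add_smul]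
      congr 1
      have hterm : ∀ k, (if d k n = 1 then c k * ε n else 0)
          = ((d k n : ℝ) * ((2:ℝ) ^ (k+1))⁻¹) * (2 * M * ε n) := by
        intro k
        rcases hdmem k n with h | h
        · rw [if_neg (by simp [h]), h]
          push_cast
          ring
        · rw [if_pos h, h]
          simp only [hcdef]
          push_cast
          ring
      rw [Finset.sum_congr rfl fun k _ => hterm k, ← Finset.sum_mul, hscalar n hn N,
        ha_eq n hn]
      simp only [hwdef]
      ring
    have hq1 : B.q (∑ n ∈ A, a n • B.e n) ^ p ≤
        (∑ k ∈ Finset.range N, B.q (c k • G k) ^ p)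
          + ∑ n ∈ A, B.q (w n • B.e n) ^ p := by
      rw [key]
      calc B.q ((∑ k ∈ Finset.range N, c k • G k) + ∑ n ∈ A, w n • B.e n) ^ p
          ≤ B.q (∑ k ∈ Finset.range N, c k • G k) ^ p
            + B.q (∑ n ∈ A, w n • B.e n) ^ p := hsub _ _
        _ ≤ _ := add_le_add (qbasis_sum_rpow B hp hsub _ _)
            (qbasis_sum_rpow B hp hsub _ _)
    have hterm1 : ∀ k ∈ Finset.range N, B.q (c k • G k) ^ p ≤ E * r ^ (k+1) := by
      intro k _
      have hck0 : 0 ≤ c k := by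
        simp only [hcdef]
        positivity
      have h1 : B.q (c k • G k) ≤ c k * (K * Q) := by
        rw [B.q_smul, abs_of_nonneg hck0]
        exact mul_le_mul_of_nonneg_left (hGk k) hck0
      calc B.q (c k • G k) ^ p ≤ (c k * (K * Q)) ^ p :=
            Real.rpow_le_rpow (B.q_nonneg _) h1 hp.le
        _ = E * r ^ (k+1) := by
            rw [show c k * (K * Q) = (2 * M * (K * Q)) * ((2:ℝ) ^ (k+1))⁻¹ by
                simp only [hcdef]; ring,
              Real.mul_rpow (by positivity) (by positivity), hpow (k+1), hEdef]
    have hterm2 : ∀ n ∈ A, B.q (w n • B.e n) ^ p ≤ E * r ^ N := by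
      intro n hn
      obtain ⟨hw1, hw2⟩ := hres n hn N
      have habs : |w n| ≤ 2 * M * ((2:ℝ) ^ N)⁻¹ := by
        simp only [hwdef]
        rw [abs_mul, hε n hn, mul_one, abs_mul, abs_of_nonneg hM2.le,
          abs_of_nonneg hw1]
        exact mul_le_mul_of_nonneg_left hw2 hM2.le
      have h1 : B.q (w n • B.e n) ≤ (2 * M * ((2:ℝ) ^ N)⁻¹) * (K * Q) := by
        rw [B.q_smul]
        exact mul_le_mul habs (hqe n hn) (B.q_nonneg _) (by positivity)
      calc B.q (w n • B.e n) ^ p ≤ ((2 * M * ((2:ℝ) ^ N)⁻¹) * (K * Q)) ^ p :=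
            Real.rpow_le_rpow (B.q_nonneg _) h1 hp.le
        _ = E * r ^ N := by
            rw [show (2 * M * ((2:ℝ) ^ N)⁻¹) * (K * Q)
                = (2 * M * (K * Q)) * ((2:ℝ) ^ N)⁻¹ by ring,
              Real.mul_rpow (by positivity) (by positivity), hpow N, hEdef]
    calc B.q (∑ n ∈ A, a n • B.e n) ^ p
        ≤ (∑ k ∈ Finset.range N, B.q (c k • G k) ^ p)
          + ∑ n ∈ A, B.q (w n • B.e n) ^ p := hq1
      _ ≤ (∑ k ∈ Finset.range N, E * r ^ (k+1)) + ∑ n ∈ A, E * r ^ N :=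
          add_le_add (Finset.sum_le_sum hterm1) (Finset.sum_le_sum hterm2)
      _ = E * (∑ k ∈ Finset.range N, r ^ (k+1)) + (A.card : ℝ) * (E * r ^ N) := by
          rw [← Finset.mul_sum, Finset.sum_const, nsmul_eq_mul]
      _ ≤ E * (((2:ℝ) ^ p - 1)⁻¹ + (A.card : ℝ) * r ^ N) := by
          rw [mul_add]
          exact add_le_add (mul_le_mul_of_nonneg_left (hgeo N) hE0) (le_of_eq (by ring))
  -- pass to the limit
  have hlim : Filter.Tendsto
      (fun N : ℕ => E * (((2:ℝ) ^ p - 1)⁻¹ + (A.card : ℝ) * r ^ N))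
      Filter.atTop (nhds (E * (((2:ℝ) ^ p - 1)⁻¹ + (A.card : ℝ) * 0))) :=
    ((((tendsto_pow_atTop_nhds_zero_of_lt_one hr0 hr1).const_mul
      ((A.card : ℝ))).const_add (((2:ℝ) ^ p - 1)⁻¹)).const_mul E)
  have hfin : B.q (∑ n ∈ A, a n • B.e n) ^ p
      ≤ E * (((2:ℝ) ^ p - 1)⁻¹ + (A.card : ℝ) * 0) := ge_of_tendsto' hlim main
  have hDp : D ^ p = ((2:ℝ) ^ p - 1)⁻¹ := by
    rw [hD, ← Real.rpow_mul (by linarith : (0:ℝ) ≤ (2:ℝ) ^ p - 1),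
      show -(1 / p) * p = -1 by field_simp, Real.rpow_neg_one]
  have hfin2 : B.q (∑ n ∈ A, a n • B.e n) ^ p ≤ ((2 * M * (K * Q)) * D) ^ p := by
    rw [Real.mul_rpow (by positivity) hDpos.le, hDp, ← hEdef]
    simpa using hfin
  have hqf : B.q (∑ n ∈ A, a n • B.e n) ≤ 2 * M * (K * Q) * D := by
    by_contra hcon
    push_neg at hcon
    have := Real.rpow_lt_rpow (by positivity) hcon hp
    linarith
  rw [max_eq_left hK1]
  calc B.q (∑ n ∈ A, a n • B.e n) ≤ 2 * M * (K * Q) * D := hqf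
    _ = 2 * K * D * M * Q := by ring
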